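/- Let epsilon be real with 0 < epsilon < 1, set delta = epsilon/15 and k = ceil(3/epsilon) + 1. Let alpha be the unique real in (1, 2) with -2*alpha + 3 + (alpha - 1)*log(2*(alpha - 1)/alpha) = 0. Set z'_k = (1 + epsilon/4)*alpha and y_k = (z'_k - 1)/z'_k; for 1 ≤ j ≤ k set y_j = (1/2)*(2*y_k)^((j-1)/(k-1)) and z'_j = y_k/(y_j*(1 - y_k)); set z_1 = z'_1 and z_j = z'_j - z'_{j-1} for 2 ≤ j ≤ k; set w_1 = 1 and w_j = y_j for 2 ≤ j ≤ k. Then sum_{j=1}^{k} z_j * (w_j - delta) ≥ 1. -/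

import Mathlib

open Finset

private lemma log74 : (1:ℝ)/2 < Real.log (7/4) := by
  have hsq : Real.exp (1/2) * Real.exp (1/2) = Real.exp 1 := by
    rw [← Real.exp_add]; norm_num
  have h : Real.exp (1/2) < 7/4 := by
    nlinarith [Real.exp_one_lt_d9, Real.exp_pos ((1:ℝ)/2)]
  calc (1:ℝ)/2 = Real.log (Real.exp (1/2)) := by rw [Real.log_exp]
    _ < Real.log (7/4) := Real.log_lt_log (Real.exp_pos _) h

private lemma alpha_ub (α : ℝ) (ha1 : 1 < α) (ha2 : α < 2)
    (haeq : -2 * α + 3 + (α - 1) * Real.log (2 * (α - 1) / α) = 0) : α ≤ 7/5 := by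
  by_contra hcon
  push_neg at hcon
  set s := 2 * (α - 1) / α with hs
  have hα0 : (0:ℝ) < α := by linarith
  have hs0 : 0 < s := by
    apply div_pos (by linarith) hα0
  have hαs : α * s = 2 * (α - 1) := by rw [hs]; field_simp
  have h1 : Real.log s = Real.log (7*s/4) - Real.log (7/4) := by
    rw [← Real.log_div (by positivity) (by norm_num)]
    congr 1
    field_simp
  have h2 : Real.log (7*s/4) ≤ 7*s/4 - 1 := Real.log_le_sub_one_of_pos (by positivity)
  have h3 : Real.log s < 7*s/4 - 3/2 := by
    have := log74; linarith
  have h4 : (α - 1) * Real.log s = 2*α - 3 := by linarith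
  have h6 : 2*α - 3 < (α - 1) * (7*s/4 - 3/2) := by
    have := mul_lt_mul_of_pos_left h3 (show (0:ℝ) < α - 1 by linarith)
    linarith
  have h7 : α * s * (α - 1) = (2*α - 2) * (α - 1) := by rw [hαs]; ring
  nlinarith [mul_lt_mul_of_pos_left h6 hα0]

private lemma alpha_lb (α : ℝ) (ha1 : 1 < α) (ha2 : α < 2)
    (haeq : -2 * α + 3 + (α - 1) * Real.log (2 * (α - 1) / α) = 0) : 4/3 ≤ α := by
  set s := 2 * (α - 1) / α with hs
  have hα0 : (0:ℝ) < α := by linarith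
  have hs0 : 0 < s := div_pos (by linarith) hα0
  have hlow : 1 - 1/s ≤ Real.log s := by
    have h := Real.log_le_sub_one_of_pos (show (0:ℝ) < s⁻¹ by positivity)
    rw [Real.log_inv] at h
    have : s⁻¹ = 1/s := by rw [one_div]
    rw [this] at h
    linarith
  have h1s : 1/s = α/(2*(α-1)) := by rw [hs, one_div_div]
  have key : (α - 1) * (1 - 1/s) = (α - 2)/2 := by
    rw [h1s]
    have hne : α - 1 ≠ 0 := by linarith
    field_simp
    ring
  have h4 : (α - 1) * Real.log s = 2*α - 3 := by linarith
  have h5 : (α - 1) * (1 - 1/s) ≤ (α - 1) * Real.log s :=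
    mul_le_mul_of_nonneg_left hlow (by linarith)
  rw [key, h4] at h5
  linarith

private lemma tele (f : ℕ → ℝ) : ∀ n : ℕ, 1 ≤ n →
    ∑ j ∈ Finset.Icc 2 n, (f j - f (j-1)) = f n - f 1 := by
  intro n hn
  induction n with
  | zero => omega
  | succ n ih =>
    rcases Nat.lt_or_ge n 1 with h | h
    · have : n = 0 := by omega
      subst this
      simp
    · rw [Finset.sum_Icc_succ_top (by omega : 2 ≤ n + 1), ih h]
      simp

set_option maxHeartbeats 2000000 in
theorem workload_inequality (epsilon : ℝ) (he0 : 0 < epsilon) (he1 : epsilon < 1)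
    (delta : ℝ) (hdelta : delta = epsilon / 15)
    (k : ℕ) (hk : k = ⌈3 / epsilon⌉₊ + 1)
    (alpha : ℝ) (ha1 : 1 < alpha) (ha2 : alpha < 2)
    (haeq : -2 * alpha + 3 + (alpha - 1) * Real.log (2 * (alpha - 1) / alpha) = 0)
    (zk : ℝ) (hzk : zk = (1 + epsilon / 4) * alpha)
    (yk : ℝ) (hyk : yk = (zk - 1) / zk)
    (y : ℕ → ℝ)
    (hy : ∀ j, 1 ≤ j → j ≤ k →
      y j = (1 / 2) * (2 * yk) ^ (((j : ℝ) - 1) / ((k : ℝ) - 1)))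
    (zp : ℕ → ℝ)
    (hzp : ∀ j, 1 ≤ j → j ≤ k → zp j = yk / (y j * (1 - yk)))
    (z : ℕ → ℝ) (hz1 : z 1 = zp 1)
    (hz : ∀ j, 2 ≤ j → j ≤ k → z j = zp j - zp (j - 1))
    (w : ℕ → ℝ) (hw1 : w 1 = 1)
    (hw : ∀ j, 2 ≤ j → j ≤ k → w j = y j) :
    ∑ j ∈ Finset.Icc 1 k, z j * (w j - delta) ≥ 1 := by
  -- basic facts about k
  have hk5 : 5 ≤ k := by
    have h3 : (3:ℝ) < 3 / epsilon := by
      rw [lt_div_iff₀ he0]; nlinarith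
    have h4 : 3 < ⌈(3:ℝ) / epsilon⌉₊ := by
      rw [Nat.lt_ceil]; exact_mod_cast h3
    omega
  have hm3 : (3:ℝ)/epsilon ≤ (k:ℝ) - 1 := by
    rw [hk]
    push_cast
    have := Nat.le_ceil ((3:ℝ)/epsilon)
    linarith
  set m : ℝ := (k:ℝ) - 1 with hm
  have hm4 : (4:ℝ) ≤ m := by
    rw [hm]
    have : (5:ℝ) ≤ (k:ℝ) := by exact_mod_cast hk5
    linarith
  have hm0 : (0:ℝ) < m := by linarith
  have hmne : m ≠ 0 := ne_of_gt hm0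
  -- bounds on alpha, zk, yk
  have hα43 : 4/3 ≤ alpha := alpha_lb alpha ha1 ha2 haeq
  have hα75 : alpha ≤ 7/5 := alpha_ub alpha ha1 ha2 haeq
  have hα0 : (0:ℝ) < alpha := by linarith
  have hzk1 : 4/3 < zk := by rw [hzk]; nlinarith
  have hzk2 : zk < 7/4 := by rw [hzk]; nlinarith
  have hzk0 : (0:ℝ) < zk := by linarith
  have hyk1 : 1/4 < yk := by
    rw [hyk, lt_div_iff₀ hzk0]; linarith
  have hyk2 : yk < 3/7 := by
    rw [hyk, div_lt_iff₀ hzk0]; linarith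
  have hyk0 : (0:ℝ) < yk := by linarith
  have hu0 : (0:ℝ) < 1 - yk := by linarith
  have hune : (1:ℝ) - yk ≠ 0 := ne_of_gt hu0
  set q : ℝ := 2 * yk with hqdef
  have hq0 : (0:ℝ) < q := by rw [hqdef]; linarith
  have hqhalf : 1/2 < q := by rw [hqdef]; linarith
  have hq1 : q < 1 := by rw [hqdef]; linarith
  set r : ℝ := q ^ ((1:ℝ)/m) with hrdef
  set C : ℝ := yk / (1 - yk) with hC
  clear_value m q r C
  -- values of y
  have hy1 : y 1 = 1/2 := by
    rw [hy 1 le_rfl (by omega)]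
    norm_num
  have hykk : y k = yk := by
    rw [hy k (by omega) le_rfl]
    rw [show ((k:ℝ) - 1)/m = 1 by rw [← hm]; exact div_self hmne]
    rw [Real.rpow_one, hqdef]; ring
  have hyj_pos : ∀ j, 1 ≤ j → j ≤ k → 0 < y j := by
    intro j h1 h2
    rw [hy j h1 h2]
    have := Real.rpow_pos_of_pos hq0 (((j:ℝ) - 1)/m)
    linarith
  have hzpy : ∀ j, 1 ≤ j → j ≤ k → zp j * y j = C := by
    intro j h1 h2
    rw [hzp j h1 h2, hC]
    have hyj := hyj_pos j h1 h2
    field_simp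
  have hstep : ∀ j, 2 ≤ j → j ≤ k → y j = r * y (j - 1) := by
    intro j h2 hjk
    rw [hy j (by omega) hjk, hy (j-1) (by omega) (by omega)]
    have hc : (((j:ℕ) - 1 : ℕ):ℝ) = (j:ℝ) - 1 := by
      have : (1:ℕ) ≤ j := by omega
      push_cast [Nat.cast_sub this]
      ring
    rw [hc, hrdef]
    rw [show ((j:ℝ) - 1)/m = 1/m + ((j:ℝ) - 1 - 1)/m by field_simp; ring]
    rw [Real.rpow_add hq0]
    ring
  -- zp values
  have hzp1 : zp 1 = 2 * C := by
    have h := hzpy 1 le_rfl (by omega)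
    rw [hy1] at h
    linarith only [h]
  have hzpk : zp k = 1/(1 - yk) := by
    rw [hzp k (by omega) le_rfl, hykk]
    rw [div_eq_div_iff (by positivity) hune]
    ring
  -- the sum formula
  have hsum : ∑ j ∈ Finset.Icc 1 k, z j * (w j - delta)
      = 2*C*(1 - delta) + m*(C*(1 - r)) - delta*(zp k - 2*C) := by
    have hins : Finset.Icc 1 k = insert 1 (Finset.Icc 2 k) := by
      ext x
      simp only [Finset.mem_Icc, Finset.mem_insert]
      omega
    have hnot : 1 ∉ Finset.Icc 2 k := by simp
    rw [hins, Finset.sum_insert hnot]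
    have hmid : ∑ j ∈ Finset.Icc 2 k, z j * (w j - delta)
        = ∑ j ∈ Finset.Icc 2 k, (C*(1 - r) - delta*(zp j - zp (j-1))) := by
      apply Finset.sum_congr rfl
      intro j hj
      rw [Finset.mem_Icc] at hj
      rw [hz j hj.1 hj.2, hw j hj.1 hj.2]
      have e1 : zp j * y j = C := hzpy j (by omega) hj.2
      have e2 : zp (j-1) * y j = C * r := by
        rw [hstep j hj.1 hj.2]
        calc zp (j-1) * (r * y (j-1)) = r * (zp (j-1) * y (j-1)) := by ring
          _ = r * C := by rw [hzpy (j-1) (by omega) (by omega)]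
          _ = C * r := by ring
      linear_combination e1 - e2
    rw [hmid, Finset.sum_sub_distrib, Finset.sum_const, ← Finset.mul_sum,
      tele zp k (by omega), Nat.card_Icc]
    have hcard : ((k + 1 - 2 : ℕ) : ℝ) = m := by
      rw [hm]
      have h1 : (1:ℕ) ≤ k := by omega
      push_cast [Nat.cast_sub h1]
      ring
    rw [nsmul_eq_mul, hcard, hz1, hw1, hzp1]
    ring
  rw [hsum, ge_iff_le, ← sub_nonneg]
  have hrw : 2*C*(1 - delta) + m*(C*(1 - r)) - delta*(zp k - 2*C) - 1
      = (3*yk - 1 - delta - m*yk*(r - 1))/(1 - yk) := by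
    rw [hzpk, hC]
    field_simp
    ring
  rw [hrw]
  apply div_nonneg _ hu0.le
  set L : ℝ := Real.log q with hL
  clear_value L
  have hL0 : L < 0 := by rw [hL]; exact Real.log_neg hq0 hq1
  have hL7 : -0.7 < L := by
    have h2 : Real.log (1/2) < Real.log q := Real.log_lt_log (by norm_num) hqhalf
    rw [one_div, Real.log_inv, ← hL] at h2
    have h3 := Real.log_two_lt_d9
    linarith only [h2, h3]
  have hre : r = Real.exp (L/m) := by
    rw [hrdef, Real.rpow_def_of_pos hq0, mul_one_div, ← hL]
  have hx0 : L/m < 0 := div_neg_of_neg_of_pos hL0 hm0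
  have h10 : (0:ℝ) < 1 - L/m := by linarith only [hx0]
  have hxe : Real.exp (L/m) ≤ 1/(1 - L/m) := by
    have h := Real.add_one_le_exp (-(L/m))
    rw [Real.exp_neg] at h
    have hp : (0:ℝ) < Real.exp (L/m) := Real.exp_pos _
    rw [le_div_iff₀ h10]
    have h2 := mul_le_mul_of_nonneg_left h hp.le
    rw [mul_inv_cancel₀ (ne_of_gt hp)] at h2
    linarith only [h2]
  have hrup : r ≤ 1 + L/m + (L/m)^2 := by
    rw [hre]
    have h2 : 1/(1-L/m) ≤ 1 + L/m + (L/m)^2 := by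
      rw [div_le_iff₀ h10]
      have hx3 : (L/m) * (L/m)^2 ≤ 0 :=
        mul_nonpos_of_nonpos_of_nonneg hx0.le (sq_nonneg _)
      have hexpand : (1 + L/m + (L/m)^2) * (1 - L/m) = 1 - (L/m)*(L/m)^2 := by ring
      rw [hexpand]
      linarith only [hx3]
    exact hxe.trans h2
  have hr2 : m*yk*(r - 1) ≤ yk*L + (yk*L^2)/m := by
    have h1 : m*yk*(r-1) ≤ m*yk*((L/m) + (L/m)^2) :=
      mul_le_mul_of_nonneg_left (by linarith only [hrup]) (by positivity)
    have h2 : m*yk*((L/m) + (L/m)^2) = yk*L + (yk*L^2)/m := by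
      field_simp
    linarith only [h1, h2]
  -- the reference point ys = (alpha-1)/alpha
  set ys : ℝ := (alpha - 1)/alpha with hys
  clear_value ys
  have hys0 : (0:ℝ) < ys := by
    rw [hys]; apply div_pos (by linarith) hα0
  have h2ys : 2 * (alpha - 1) / alpha = 2*ys := by rw [hys]; ring
  rw [h2ys] at haeq
  have hstar : 3*ys - 1 - ys*Real.log (2*ys) = 0 := by
    have hx : (alpha-1)*Real.log (2*ys) = 2*alpha - 3 := by linarith only [haeq]
    have hh : 3*ys - 1 - ys*Real.log (2*ys)
        = (2*alpha - 3 - (alpha-1)*Real.log (2*ys))/alpha := by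
      rw [hys]; field_simp; ring
    rw [hh, hx]
    simp
  have hlq : L = Real.log 2 + Real.log yk := by
    rw [hL, hqdef, Real.log_mul two_ne_zero (ne_of_gt hyk0)]
  have hl2ys : Real.log (2*ys) = Real.log 2 + Real.log ys :=
    Real.log_mul two_ne_zero (ne_of_gt hys0)
  have hD : Real.log yk - Real.log ys ≤ yk/ys - 1 := by
    have h := Real.log_le_sub_one_of_pos (show (0:ℝ) < yk/ys by positivity)
    rwa [Real.log_div (ne_of_gt hyk0) (ne_of_gt hys0)] at h
  have hD2 : ys*(Real.log yk - Real.log ys) ≤ yk - ys := by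
    have h1 := mul_le_mul_of_nonneg_left hD hys0.le
    have h2 : ys*(yk/ys - 1) = yk - ys := by field_simp
    linarith only [h1, h2]
  have p1 : ys*Real.log (2*ys) = ys*Real.log 2 + ys*Real.log ys := by
    rw [hl2ys]; ring
  have p2 : ys*L = ys*Real.log 2 + ys*Real.log yk := by rw [hlq]; ring
  have hconc : 3*yk - 1 - yk*L ≥ (2 - L)*(yk - ys) := by
    linarith only [hstar, hD2, p1, p2]
  have hdiff : yk - ys = epsilon/(4*zk) := by
    rw [hyk, hys, hzk]
    have hz0' : (1 + epsilon/4)*alpha ≠ 0 := by positivity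
    field_simp
    ring
  have hdiff2 : epsilon/7 ≤ yk - ys := by
    rw [hdiff]
    apply div_le_div_of_nonneg_left he0.le (by linarith only [hzk0]) (by linarith only [hzk2])
  have hfslack : 3*yk - 1 - yk*L ≥ (2 - L)*(epsilon/7) := by
    have h1 : (2-L)*(epsilon/7) ≤ (2-L)*(yk - ys) :=
      mul_le_mul_of_nonneg_left hdiff2 (by linarith only [hL0])
    linarith only [h1, hconc]
  have hinvm : 1/m ≤ epsilon/3 := by
    rw [div_le_div_iff₀ hm0 (by norm_num : (0:ℝ) < 3)]
    have h1 := (div_le_iff₀ he0).mp hm3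
    linarith only [h1]
  have hquad : (yk*L^2)/m ≤ (1/7)*L^2*epsilon := by
    have e0 : (0:ℝ) ≤ yk*L^2 := by positivity
    have e2 : (yk*L^2)/m ≤ (yk*L^2)*(epsilon/3) := by
      rw [div_eq_mul_inv]
      apply mul_le_mul_of_nonneg_left _ e0
      rw [← one_div]; exact hinvm
    have e1 : (yk*L^2)*(epsilon/3) ≤ ((3/7)*L^2)*(epsilon/3) := by
      apply mul_le_mul_of_nonneg_right _ (by positivity)
      have h1 := mul_nonneg (by linarith only [hyk2] : (0:ℝ) ≤ 3/7 - yk) (sq_nonneg L)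
      linarith only [h1]
    calc (yk*L^2)/m ≤ ((3/7)*L^2)*(epsilon/3) := le_trans e2 e1
      _ = (1/7)*L^2*epsilon := by ring
  have hbr : (2-L)/7 - 1/15 - (1/7)*L^2 ≥ 0 := by
    have h1 := mul_nonneg (by linarith only [hL7] : (0:ℝ) ≤ L + 0.7)
      (by linarith only [hL0] : (0:ℝ) ≤ -L)
    linarith only [h1, hL0]
  have hbr2 : epsilon * ((2-L)/7 - 1/15 - (1/7)*L^2) ≥ 0 := mul_nonneg he0.le hbr
  have final : m*yk*(r-1) ≤ yk*L + (1/7)*L^2*epsilon := by linarith only [hr2, hquad]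
  rw [hdelta]
  linarith only [hfslack, final, hbr2]
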